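/- Let (A_m)_{m∈ℤ∖{0}} be complex numbers with Σ_{m≠0} |A_m|/|m| < ∞, and define B(ζ) := −(1/(πi))·Σ_{m∈ℤ∖{0}} A_m/(ζ − 2πim) for ζ ∉ 2πiℤ. Then for every y ∈ ℂ with Re(y) > 0, ∫₀^∞ e^{−ζ/y} B(ζ) dζ = −2·Σ_{m∈ℤ∖{0}} A_m e₁(−m/y), and for every y with Re(y) < 0, ∫₀^{−∞} e^{−ζ/y} B(ζ) dζ = −2·Σ_{m∈ℤ∖{0}} A_m e₁(−m/y), where the Laplace integrals are taken along the positive and negative real axes respectively. -/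

import Mathlib

noncomputable section

open Complex Filter Topology MeasureTheory Set

/-- `e₁(z) = (1/2πi) ∫₀^∞ e^{-2πt}/(t + iz) dt`. -/
def e1 (z : ℂ) : ℂ :=
  1 / (2 * Real.pi * I) *
    ∫ t in Set.Ioi (0 : ℝ), Complex.exp (-2 * Real.pi * t) / ((t : ℂ) + I * z)

def Faux (m : ℤ) (w : ℂ) : ℂ :=
  ∫ t in Set.Ioi (0:ℝ), Complex.exp (-(w * t)) / ((t : ℂ) - 2 * Real.pi * I * m)

def Gaux (m : ℤ) (w : ℂ) : ℂ :=
  ∫ t in Set.Ioi (0:ℝ), Complex.exp (-2 * Real.pi * t) / ((t : ℂ) + I * (-(m:ℂ) * w))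

lemma dlb1 (m : ℤ) (t : ℝ) : 2*Real.pi*|(m:ℝ)| ≤ ‖(t:ℂ) - 2*Real.pi*I*(m:ℂ)‖ := by
  have h : ((t:ℂ) - 2*Real.pi*I*(m:ℂ)).im = -(2*Real.pi*(m:ℝ)) := by simp
  calc 2*Real.pi*|(m:ℝ)| = |((t:ℂ) - 2*Real.pi*I*(m:ℂ)).im| := by
        rw [h, abs_neg, abs_mul, abs_of_pos (by positivity : (0:ℝ) < 2*Real.pi)]
    _ ≤ ‖(t:ℂ) - 2*Real.pi*I*(m:ℂ)‖ := Complex.abs_im_le_norm _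

lemma dnz1 (m : ℤ) (hm : m ≠ 0) (t : ℝ) : (t:ℂ) - 2*Real.pi*I*(m:ℂ) ≠ 0 := by
  intro h
  have := dlb1 m t
  rw [h, norm_zero] at this
  have hm' : (0:ℝ) < |(m:ℝ)| := by
    simpa using abs_pos.mpr (by exact_mod_cast hm : ((m:ℝ) ≠ 0))
  nlinarith [Real.pi_pos]

lemma dlb2 (m : ℤ) (w : ℂ) (hr : 0 ≤ w.re) (s : ℝ) :
    |(m:ℝ)| * w.re ≤ ‖(s:ℂ) + I * (-(m:ℂ) * w)‖ := by
  have h : ((s:ℂ) + I * (-(m:ℂ) * w)).im = -((m:ℝ) * w.re) := by simp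
  calc |(m:ℝ)| * w.re = |(-((m:ℝ) * w.re))| := by
        rw [abs_neg, abs_mul, _root_.abs_of_nonneg hr]
    _ = |((s:ℂ) + I * (-(m:ℂ) * w)).im| := by rw [h]
    _ ≤ _ := Complex.abs_im_le_norm _

lemma dnz2 (m : ℤ) (hm : m ≠ 0) (w : ℂ) (hr : 0 < w.re) (s : ℝ) :
    (s:ℂ) + I * (-(m:ℂ) * w) ≠ 0 := by
  intro h
  have := dlb2 m w hr.le s
  rw [h, norm_zero] at this
  have hm' : (0:ℝ) < |(m:ℝ)| := abs_pos.mpr (by exact_mod_cast hm)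
  nlinarith

lemma normexp (w : ℂ) (t : ℝ) : ‖Complex.exp (-(w * t))‖ = Real.exp (-(w.re * t)) := by
  rw [Complex.norm_exp]
  congr 1
  simp

lemma normexp2 (t : ℝ) : ‖Complex.exp (-2 * Real.pi * (t:ℂ))‖ = Real.exp (-(2*Real.pi*t)) := by
  rw [Complex.norm_exp]
  congr 1
  norm_cast
  simp

lemma intF (m : ℤ) (hm : m ≠ 0) {w : ℂ} (hw : 0 < w.re) :
    IntegrableOn (fun t : ℝ => Complex.exp (-(w * t)) / ((t:ℂ) - 2*Real.pi*I*(m:ℂ))) (Ioi 0) := by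
  have hm' : (0:ℝ) < 2*Real.pi*|(m:ℝ)| := by
    have : (0:ℝ) < |(m:ℝ)| := abs_pos.mpr (by exact_mod_cast hm)
    positivity
  have hcont : Continuous fun t : ℝ => Complex.exp (-(w * t)) / ((t:ℂ) - 2*Real.pi*I*(m:ℂ)) := by
    apply Continuous.div
    · exact Complex.continuous_exp.comp (by continuity)
    · continuity
    · exact fun t => dnz1 m hm t
  refine Integrable.mono' (((exp_neg_integrableOn_Ioi 0 hw).const_mul ((2*Real.pi*|(m:ℝ)|)⁻¹)))
    hcont.aestronglyMeasurable (ae_of_all _ fun t => ?_)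
  calc ‖Complex.exp (-(w * t)) / ((t:ℂ) - 2*Real.pi*I*(m:ℂ))‖
      = Real.exp (-(w.re * t)) / ‖(t:ℂ) - 2*Real.pi*I*(m:ℂ)‖ := by rw [norm_div, normexp]
    _ ≤ Real.exp (-(w.re * t)) / (2*Real.pi*|(m:ℝ)|) := by
        gcongr
        exact dlb1 m t
    _ = (2*Real.pi*|(m:ℝ)|)⁻¹ * Real.exp (-w.re * t) := by
        rw [neg_mul, div_eq_mul_inv, mul_comm]

lemma intG (m : ℤ) (hm : m ≠ 0) {w : ℂ} (hw : 0 < w.re) :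
    IntegrableOn (fun t : ℝ => Complex.exp (-2*Real.pi*(t:ℂ)) / ((t:ℂ) + I * (-(m:ℂ) * w))) (Ioi 0) := by
  have hm0 : (0:ℝ) < |(m:ℝ)| := abs_pos.mpr (by exact_mod_cast hm)
  have hd : (0:ℝ) < |(m:ℝ)| * w.re := by positivity
  have hcont : Continuous fun t : ℝ => Complex.exp (-2*Real.pi*(t:ℂ)) / ((t:ℂ) + I * (-(m:ℂ) * w)) := by
    apply Continuous.div
    · exact Complex.continuous_exp.comp (by continuity)
    · continuity
    · exact fun t => dnz2 m hm w hw t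
  refine Integrable.mono' ((exp_neg_integrableOn_Ioi 0 (by positivity : (0:ℝ) < 2*Real.pi)).const_mul
    ((|(m:ℝ)| * w.re)⁻¹)) hcont.aestronglyMeasurable (ae_of_all _ fun t => ?_)
  calc ‖Complex.exp (-2*Real.pi*(t:ℂ)) / ((t:ℂ) + I * (-(m:ℂ) * w))‖
      = Real.exp (-(2*Real.pi*t)) / ‖(t:ℂ) + I * (-(m:ℂ) * w)‖ := by rw [norm_div, normexp2]
    _ ≤ Real.exp (-(2*Real.pi*t)) / (|(m:ℝ)| * w.re) := by
        gcongr
        exact dlb2 m w hw.le t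
    _ = (|(m:ℝ)| * w.re)⁻¹ * Real.exp (-(2*Real.pi)*t) := by
        rw [neg_mul, div_eq_mul_inv, mul_comm]

-- differentiability of Faux
lemma diffF (m : ℤ) (hm : m ≠ 0) {w₀ : ℂ} (hw : 0 < w₀.re) :
    DifferentiableAt ℂ (Faux m) w₀ := by
  set r := w₀.re with hr
  have hm0 : (0:ℝ) < |(m:ℝ)| := abs_pos.mpr (by exact_mod_cast hm)
  have hball : ∀ w ∈ Metric.ball w₀ (r/2), r/2 < w.re := by
    intro w hwb
    have h1 : |(w - w₀).re| ≤ ‖w - w₀‖ := Complex.abs_re_le_norm _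
    rw [Metric.mem_ball, dist_eq_norm] at hwb
    have := abs_lt.mp (lt_of_le_of_lt h1 hwb)
    simp only [Complex.sub_re] at this
    linarith [this.1]
  have key := hasDerivAt_integral_of_dominated_loc_of_deriv_le
    (F := fun w (t:ℝ) => Complex.exp (-(w * t)) / ((t:ℂ) - 2*Real.pi*I*(m:ℂ)))
    (F' := fun w (t:ℝ) => (Complex.exp (-(w * t)) * -(t:ℂ)) / ((t:ℂ) - 2*Real.pi*I*(m:ℂ)))
    (x₀ := w₀) (bound := fun t : ℝ => (2*Real.pi*|(m:ℝ)|)⁻¹ * ((4/r) * Real.exp (-(r/4) * t)))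
    (μ := volume.restrict (Ioi 0)) (s := Metric.ball w₀ (r/2)) (Metric.ball_mem_nhds w₀ (by positivity))
    ?_ ?_ ?_ ?_ ?_ ?_
  · exact key.2.differentiableAt
  · filter_upwards with w
    have hcont : Continuous fun t : ℝ => Complex.exp (-(w * t)) / ((t:ℂ) - 2*Real.pi*I*(m:ℂ)) := by
      apply Continuous.div
      · exact Complex.continuous_exp.comp (by continuity)
      · continuity
      · exact fun t => dnz1 m hm t
    exact hcont.aestronglyMeasurable
  · exact intF m hm hw
  · have hcont : Continuous fun t : ℝ => (Complex.exp (-(w₀ * t)) * -(t:ℂ)) / ((t:ℂ) - 2*Real.pi*I*(m:ℂ)) := by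
      apply Continuous.div
      · exact (Complex.continuous_exp.comp (by continuity)).mul (by continuity)
      · continuity
      · exact fun t => dnz1 m hm t
    exact hcont.aestronglyMeasurable
  · rw [ae_restrict_iff' measurableSet_Ioi]
    filter_upwards with t ht
    intro w hwb
    have hwre : r/2 < w.re := hball w hwb
    have ht0 : (0:ℝ) < t := ht
    have hnd : ‖(Complex.exp (-(w * t)) * -(t:ℂ)) / ((t:ℂ) - 2*Real.pi*I*(m:ℂ))‖
        = Real.exp (-(w.re * t)) * t / ‖(t:ℂ) - 2*Real.pi*I*(m:ℂ)‖ := by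
      rw [norm_div, norm_mul, normexp, norm_neg]
      congr 2
      simpa using abs_of_pos ht0
    rw [hnd]
    have hb1 : Real.exp (-(w.re * t)) * t ≤ (4/r) * Real.exp (-(r/4) * t) := by
      have e1 : Real.exp (-(w.re * t)) ≤ Real.exp (-(r/2 * t)) := by
        apply Real.exp_le_exp.mpr; nlinarith
      have e2 : t * Real.exp (-(r/4) * t) ≤ 4/r := by
        have h3 : (r/4) * t ≤ Real.exp ((r/4) * t) := by
          nlinarith [Real.add_one_le_exp ((r/4)*t)]
        have hexp : (0:ℝ) < Real.exp ((r/4) * t) := Real.exp_pos _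
        have hinv : Real.exp (-(r/4) * t) = (Real.exp ((r/4)*t))⁻¹ := by
          rw [← Real.exp_neg]; congr 1; ring
        rw [hinv, ← div_eq_mul_inv, div_le_div_iff₀ hexp (by positivity : (0:ℝ) < r)] at *
        nlinarith
      have hsplit : Real.exp (-(r/2 * t)) = Real.exp (-(r/4) * t) * Real.exp (-(r/4) * t) := by
        rw [← Real.exp_add]; congr 1; ring
      have e3 : Real.exp (-(w.re * t)) * t ≤ Real.exp (-(r/2 * t)) * t :=
        mul_le_mul_of_nonneg_right e1 ht0.le
      have e4 : Real.exp (-(r/2*t)) * t = (t * Real.exp (-(r/4)*t)) * Real.exp (-(r/4)*t) := by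
        rw [hsplit]; ring
      calc Real.exp (-(w.re * t)) * t ≤ (t * Real.exp (-(r/4)*t)) * Real.exp (-(r/4)*t) := by
            rw [← e4]; exact e3
        _ ≤ (4/r) * Real.exp (-(r/4) * t) :=
            mul_le_mul_of_nonneg_right e2 (Real.exp_pos _).le
    have hdpos : (0:ℝ) < 2*Real.pi*|(m:ℝ)| := by positivity
    calc Real.exp (-(w.re * t)) * t / ‖(t:ℂ) - 2*Real.pi*I*(m:ℂ)‖
        ≤ ((4/r) * Real.exp (-(r/4) * t)) / (2*Real.pi*|(m:ℝ)|) :=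
          div_le_div₀ (by positivity) hb1 hdpos (dlb1 m t)
      _ = (2*Real.pi*|(m:ℝ)|)⁻¹ * ((4/r) * Real.exp (-(r/4) * t)) := by
          rw [div_eq_mul_inv, mul_comm]
  · exact ((exp_neg_integrableOn_Ioi 0 (by positivity : (0:ℝ) < r/4)).const_mul (4/r)).const_mul _
  · rw [ae_restrict_iff' measurableSet_Ioi]
    filter_upwards with t ht
    intro w hwb
    have h1 : HasDerivAt (fun w : ℂ => -(w * (t:ℂ))) (-(t:ℂ)) w := by
      have := ((hasDerivAt_id' w).mul_const (t:ℂ)).neg; simp only [one_mul] at this; exact this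
    exact (h1.cexp).div_const _

lemma diffG (m : ℤ) (hm : m ≠ 0) {w₀ : ℂ} (hw : 0 < w₀.re) :
    DifferentiableAt ℂ (Gaux m) w₀ := by
  set r := w₀.re with hr
  have hm0 : (0:ℝ) < |(m:ℝ)| := abs_pos.mpr (by exact_mod_cast hm)
  have hball : ∀ w ∈ Metric.ball w₀ (r/2), r/2 < w.re := by
    intro w hwb
    have h1 : |(w - w₀).re| ≤ ‖w - w₀‖ := Complex.abs_re_le_norm _
    rw [Metric.mem_ball, dist_eq_norm] at hwb
    have := abs_lt.mp (lt_of_le_of_lt h1 hwb)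
    simp only [Complex.sub_re] at this
    linarith [this.1]
  have key := hasDerivAt_integral_of_dominated_loc_of_deriv_le
    (F := fun w (t:ℝ) => Complex.exp (-2*Real.pi*(t:ℂ)) / ((t:ℂ) + I * (-(m:ℂ) * w)))
    (F' := fun w (t:ℝ) => (0 * ((t:ℂ) + I * (-(m:ℂ) * w)) - Complex.exp (-2*Real.pi*(t:ℂ)) * (I * -(m:ℂ)))
      / ((t:ℂ) + I * (-(m:ℂ) * w))^2)
    (x₀ := w₀) (bound := fun t : ℝ => (4/(|(m:ℝ)| * r^2)) * Real.exp (-(2*Real.pi) * t))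
    (μ := volume.restrict (Ioi 0)) (s := Metric.ball w₀ (r/2)) (Metric.ball_mem_nhds w₀ (by positivity))
    ?_ ?_ ?_ ?_ ?_ ?_
  · exact key.2.differentiableAt
  · filter_upwards [Metric.ball_mem_nhds w₀ (by positivity : (0:ℝ) < r/2)] with w hwb
    have hwre : 0 < w.re := lt_trans (by positivity) (hball w hwb)
    have hcont : Continuous fun t : ℝ => Complex.exp (-2*Real.pi*(t:ℂ)) / ((t:ℂ) + I * (-(m:ℂ) * w)) := by
      apply Continuous.div
      · exact Complex.continuous_exp.comp (by continuity)
      · continuity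
      · exact fun t => dnz2 m hm w hwre t
    exact hcont.aestronglyMeasurable
  · exact intG m hm hw
  · have hcont : Continuous fun t : ℝ =>
        (0 * ((t:ℂ) + I * (-(m:ℂ) * w₀)) - Complex.exp (-2*Real.pi*(t:ℂ)) * (I * -(m:ℂ)))
          / ((t:ℂ) + I * (-(m:ℂ) * w₀))^2 := by
      apply Continuous.div
      · apply Continuous.sub
        · continuity
        · exact (Complex.continuous_exp.comp (by continuity)).mul continuous_const
      · continuity
      · exact fun t => pow_ne_zero 2 (dnz2 m hm w₀ hw t)
    exact hcont.aestronglyMeasurable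
  · rw [ae_restrict_iff' measurableSet_Ioi]
    filter_upwards with t ht
    intro w hwb
    have hwre : r/2 < w.re := hball w hwb
    have hnum : ‖(0 * ((t:ℂ) + I * (-(m:ℂ) * w)) - Complex.exp (-2*Real.pi*(t:ℂ)) * (I * -(m:ℂ)))‖
        = Real.exp (-(2*Real.pi*t)) * |(m:ℝ)| := by
      rw [zero_mul, zero_sub, norm_neg, norm_mul, normexp2]
      congr 1
      simp
    have hden : (|(m:ℝ)| * (r/2))^2 ≤ ‖((t:ℂ) + I * (-(m:ℂ) * w))^2‖ := by
      rw [norm_pow]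
      apply pow_le_pow_left₀ (by positivity)
      calc |(m:ℝ)| * (r/2) ≤ |(m:ℝ)| * w.re := mul_le_mul_of_nonneg_left hwre.le (abs_nonneg _)
        _ ≤ _ := dlb2 m w (by linarith : (0:ℝ) ≤ w.re) t
    rw [norm_div, hnum]
    calc Real.exp (-(2*Real.pi*t)) * |(m:ℝ)| / ‖((t:ℂ) + I * (-(m:ℂ) * w))^2‖
        ≤ Real.exp (-(2*Real.pi*t)) * |(m:ℝ)| / (|(m:ℝ)| * (r/2))^2 :=
          div_le_div₀ (by positivity) le_rfl (by positivity) hden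
      _ = (4/(|(m:ℝ)| * r^2)) * Real.exp (-(2*Real.pi) * t) := by
          rw [neg_mul]
          field_simp
          ring
  · exact (exp_neg_integrableOn_Ioi 0 (by positivity : (0:ℝ) < 2*Real.pi)).const_mul _
  · rw [ae_restrict_iff' measurableSet_Ioi]
    filter_upwards with t ht
    intro w hwb
    have hwre : 0 < w.re := lt_trans (by positivity) (hball w hwb)
    have hd : HasDerivAt (fun w : ℂ => (t:ℂ) + I * (-(m:ℂ) * w)) (I * -(m:ℂ)) w := by
      simpa using ((((hasDerivAt_id w).const_mul (-(m:ℂ))).const_mul I).const_add (t:ℂ))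
    exact (hasDerivAt_const w _).div hd (dnz2 m hm w hwre t)

lemma realEq (m : ℤ) (hm : m ≠ 0) {x : ℝ} (hx : 0 < x) : Faux m (x:ℂ) = Gaux m (x:ℂ) := by
  have hπ := Real.pi_pos
  have hk : (0:ℝ) < 2*Real.pi/x := by positivity
  set k : ℝ := 2*Real.pi/x with hkdef
  have hsub := integral_comp_mul_left_Ioi
    (fun t : ℝ => Complex.exp (-((x:ℂ) * t)) / ((t:ℂ) - 2*Real.pi*I*(m:ℂ))) 0 hk
  rw [mul_zero] at hsub
  have hF : Faux m (x:ℂ) = k • ∫ s in Ioi (0:ℝ),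
      Complex.exp (-((x:ℂ) * (k*s : ℝ))) / (((k*s : ℝ):ℂ) - 2*Real.pi*I*(m:ℂ)) := by
    rw [hsub, ← smul_assoc, smul_eq_mul, mul_inv_cancel₀ hk.ne', one_smul]
    rfl
  rw [hF, ← integral_smul]
  apply setIntegral_congr_fun measurableSet_Ioi
  intro s _
  have hx0 : (x:ℂ) ≠ 0 := by exact_mod_cast hx.ne'
  have hexp : -((x:ℂ) * ((k*s : ℝ):ℂ)) = -2*Real.pi*(s:ℂ) := by
    push_cast [hkdef]
    field_simp
  have hden : (((k*s : ℝ):ℂ) - 2*Real.pi*I*(m:ℂ)) = (k:ℂ) * ((s:ℂ) + I * (-(m:ℂ) * (x:ℂ))) := by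
    push_cast [hkdef]
    field_simp
    ring
  show (k:ℝ) • (Complex.exp (-((x:ℂ) * ((k*s:ℝ):ℂ))) / (((k*s:ℝ):ℂ) - 2*Real.pi*I*(m:ℂ)))
      = Complex.exp (-2*Real.pi*(s:ℂ)) / ((s:ℂ) + I * (-(m:ℂ)*(x:ℂ)))
  rw [Complex.real_smul, hexp, hden]
  have hk0 : (k:ℂ) ≠ 0 := by exact_mod_cast hk.ne'
  rw [mul_div_assoc']
  rw [mul_comm ((k:ℂ)) _, mul_div_assoc, div_mul_cancel_left₀ hk0, ← div_eq_mul_inv]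

lemma keyEq (m : ℤ) (hm : m ≠ 0) {w : ℂ} (hw : 0 < w.re) : Faux m w = Gaux m w := by
  have hU : IsOpen {z : ℂ | 0 < z.re} := isOpen_lt continuous_const Complex.continuous_re
  have hFd : DifferentiableOn ℂ (Faux m) {z : ℂ | 0 < z.re} :=
    fun z hz => (diffF m hm hz).differentiableWithinAt
  have hGd : DifferentiableOn ℂ (Gaux m) {z : ℂ | 0 < z.re} :=
    fun z hz => (diffG m hm hz).differentiableWithinAt
  have hF : AnalyticOnNhd ℂ (Faux m) {z : ℂ | 0 < z.re} := hFd.analyticOnNhd hU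
  have hG : AnalyticOnNhd ℂ (Gaux m) {z : ℂ | 0 < z.re} := hGd.analyticOnNhd hU
  have hpre : IsPreconnected {z : ℂ | 0 < z.re} := (convex_halfSpace_re_gt 0).isPreconnected
  have h1 : (1:ℂ) ∈ {z : ℂ | 0 < z.re} := by simp
  have hfreq : ∃ᶠ z in 𝓝[≠] (1:ℂ), Faux m z = Gaux m z := by
    have htend : Tendsto (fun n : ℕ => ((1 + ((n:ℝ)+1)⁻¹ : ℝ) : ℂ)) atTop (𝓝[≠] (1:ℂ)) := by
      apply tendsto_nhdsWithin_of_tendsto_nhds_of_eventually_within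
      · have : Tendsto (fun n : ℕ => (1 + ((n:ℝ)+1)⁻¹ : ℝ)) atTop (𝓝 1) := by
          have := tendsto_one_div_add_atTop_nhds_zero_nat (𝕜 := ℝ)
          simpa [one_div] using tendsto_const_nhds.add this
        exact (Complex.continuous_ofReal.tendsto 1).comp this
      · filter_upwards with n
        simp only [mem_compl_iff, mem_singleton_iff]
        intro h
        have : (1 + ((n:ℝ)+1)⁻¹ : ℝ) = 1 := by exact_mod_cast h
        have : ((n:ℝ)+1)⁻¹ = 0 := by linarith
        simp at this
        linarith [this]
    have hev : ∀ n : ℕ, Faux m ((1 + ((n:ℝ)+1)⁻¹ : ℝ) : ℂ) = Gaux m ((1 + ((n:ℝ)+1)⁻¹ : ℝ) : ℂ) :=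
      fun n => realEq m hm (by positivity)
    exact htend.frequently (Eventually.frequently (Eventually.of_forall hev))
  exact hF.eqOn_of_preconnected_of_frequently_eq hG hpre h1 hfreq hw

lemma normBnd (m : ℤ) (hm : m ≠ 0) (w : ℂ) (t : ℝ) :
    ‖Complex.exp (-(w * t)) / ((t:ℂ) - 2*Real.pi*I*(m:ℂ))‖
      ≤ (2*Real.pi*|(m:ℝ)|)⁻¹ * Real.exp (-w.re * t) := by
  rw [norm_div, normexp, neg_mul]
  have hd : (0:ℝ) < 2*Real.pi*|(m:ℝ)| := by
    have : (0:ℝ) < |(m:ℝ)| := abs_pos.mpr (by exact_mod_cast hm)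
    positivity
  rw [div_eq_mul_inv, mul_comm]
  gcongr
  exact dlb1 m t

lemma master (B : {m : ℤ // m ≠ 0} → ℂ)
    (hB : Summable fun m : {m : ℤ // m ≠ 0} => ‖B m‖ / |((m.1 : ℤ) : ℝ)|)
    {w : ℂ} (hw : 0 < w.re) :
    (∫ t in Set.Ioi (0:ℝ), Complex.exp (-(w * t)) *
        (-(1 / (Real.pi * I)) * ∑' m : {m : ℤ // m ≠ 0}, B m / ((t:ℂ) - 2*Real.pi*I*(m.1:ℂ))))
      = -2 * ∑' m : {m : ℤ // m ≠ 0}, B m * e1 (-(m.1:ℂ) * w) := by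
  have hπ := Real.pi_pos
  set C : ℂ := -(1 / (Real.pi * I)) with hC
  set f : {m : ℤ // m ≠ 0} → ℝ → ℂ :=
    fun m t => (C * B m) * (Complex.exp (-(w * t)) / ((t:ℂ) - 2*Real.pi*I*(m.1:ℂ))) with hf
  have hpt : ∀ t : ℝ, Complex.exp (-(w*t)) *
      (C * ∑' m : {m : ℤ // m ≠ 0}, B m / ((t:ℂ) - 2*Real.pi*I*(m.1:ℂ))) = ∑' m, f m t := by
    intro t
    rw [← tsum_mul_left, ← tsum_mul_left]
    exact tsum_congr fun m => by rw [hf]; ring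
  simp_rw [hpt]
  have hint : ∀ m : {m : ℤ // m ≠ 0}, IntegrableOn (f m) (Ioi 0) :=
    fun m => (intF m.1 m.2 hw).const_mul _
  set Kexp : ℝ := ∫ t in Ioi (0:ℝ), Real.exp (-w.re * t) with hK
  have hKnn : 0 ≤ Kexp := integral_nonneg fun t => (Real.exp_pos _).le
  have hle : ∀ m : {m : ℤ // m ≠ 0}, (∫ t in Ioi (0:ℝ), ‖f m t‖)
      ≤ (‖C‖ * Kexp * (2*Real.pi)⁻¹) * (‖B m‖ / |((m.1 : ℤ) : ℝ)|) := by
    intro m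
    have hm0 : (0:ℝ) < |((m.1:ℤ):ℝ)| := abs_pos.mpr (by exact_mod_cast m.2)
    have h1 : ∀ t : ℝ, ‖f m t‖ ≤ (‖C‖ * ‖B m‖ * (2*Real.pi*|((m.1:ℤ):ℝ)|)⁻¹) * Real.exp (-w.re * t) := by
      intro t
      rw [hf]
      simp only [norm_mul]
      calc ‖C‖ * ‖B m‖ * ‖Complex.exp (-(w * t)) / ((t:ℂ) - 2*Real.pi*I*((m.1:ℤ):ℂ))‖
          ≤ ‖C‖ * ‖B m‖ * ((2*Real.pi*|((m.1:ℤ):ℝ)|)⁻¹ * Real.exp (-w.re * t)) := by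
            gcongr
            exact normBnd m.1 m.2 w t
        _ = _ := by ring
    calc (∫ t in Ioi (0:ℝ), ‖f m t‖)
        ≤ ∫ t in Ioi (0:ℝ), (‖C‖ * ‖B m‖ * (2*Real.pi*|((m.1:ℤ):ℝ)|)⁻¹) * Real.exp (-w.re * t) := by
          apply integral_mono_of_nonneg (ae_of_all _ fun t => norm_nonneg _)
            ((exp_neg_integrableOn_Ioi 0 hw).const_mul _) (ae_of_all _ h1)
      _ = (‖C‖ * ‖B m‖ * (2*Real.pi*|((m.1:ℤ):ℝ)|)⁻¹) * Kexp := by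
          rw [integral_const_mul]
      _ = (‖C‖ * Kexp * (2*Real.pi)⁻¹) * (‖B m‖ / |((m.1 : ℤ) : ℝ)|) := by
          field_simp
  have hsum : Summable fun m : {m : ℤ // m ≠ 0} => ∫ t in Ioi (0:ℝ), ‖f m t‖ :=
    Summable.of_nonneg_of_le (fun m => integral_nonneg fun t => norm_nonneg _) hle
      (hB.mul_left _)
  rw [← integral_tsum_of_summable_integral_norm hint hsum]
  have hval : ∀ m : {m : ℤ // m ≠ 0},
      (∫ t in Ioi (0:ℝ), f m t) = -2 * (B m * e1 (-(m.1:ℂ) * w)) := by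
    intro m
    have hfe : (∫ t in Ioi (0:ℝ), f m t)
        = (C * B m) * ∫ t in Ioi (0:ℝ), Complex.exp (-(w * t)) / ((t:ℂ) - 2*Real.pi*I*(m.1:ℂ)) := by
      rw [hf]; exact integral_const_mul _ _
    rw [hfe]
    have h2 : (∫ t in Ioi (0:ℝ), Complex.exp (-(w * t)) / ((t:ℂ) - 2*Real.pi*I*(m.1:ℂ)))
        = Gaux m.1 w := keyEq m.1 m.2 hw
    rw [h2]
    have h3 : e1 (-(m.1:ℂ) * w) = 1/(2*Real.pi*I) * Gaux m.1 w := rfl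
    have hπI : (Real.pi:ℂ) * I ≠ 0 :=
      mul_ne_zero (by exact_mod_cast hπ.ne') I_ne_zero
    have hCval : C = -2 * (1/(2*Real.pi*I)) := by
      rw [hC]
      field_simp
    rw [h3, hCval]
    ring
  rw [tsum_congr hval, tsum_mul_left]

/-- Laplace transforms of `B(ζ) = -(1/πi) Σ_{m≠0} A_m/(ζ - 2πim)` along
the positive and negative real axes are given by `-2 Σ_{m≠0} A_m e₁(-m/y)` for
`Re(y) > 0` and `Re(y) < 0` respectively. -/
theorem stmt9 (A : {m : ℤ // m ≠ 0} → ℂ)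
    (hA : Summable fun m : {m : ℤ // m ≠ 0} => ‖A m‖ / |((m.1 : ℤ) : ℝ)|) :
    -- Laplace integral along the positive real axis, for Re(y) > 0
    (∀ y : ℂ, 0 < y.re →
      (∫ t in Set.Ioi (0 : ℝ), Complex.exp (-(t : ℂ) / y) *
          (-(1 / (Real.pi * I)) *
            ∑' m : {m : ℤ // m ≠ 0}, A m / ((t : ℂ) - 2 * Real.pi * I * (m.1 : ℂ))))
        = -2 * ∑' m : {m : ℤ // m ≠ 0}, A m * e1 (-(m.1 : ℂ) / y)) ∧
    -- Laplace integral along the negative real axis (ζ = -t), for Re(y) < 0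
    (∀ y : ℂ, y.re < 0 →
      (-∫ t in Set.Ioi (0 : ℝ), Complex.exp ((t : ℂ) / y) *
          (-(1 / (Real.pi * I)) *
            ∑' m : {m : ℤ // m ≠ 0}, A m / (-(t : ℂ) - 2 * Real.pi * I * (m.1 : ℂ))))
        = -2 * ∑' m : {m : ℤ // m ≠ 0}, A m * e1 (-(m.1 : ℂ) / y)) := by
  
  constructor
  · intro y hy
    have hy0 : y ≠ 0 := fun h => by simp [h] at hy
    have hw : 0 < (y⁻¹).re := by
      rw [Complex.inv_re]
      exact div_pos hy (Complex.normSq_pos.mpr hy0)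
    have h1 : ∀ t : ℝ, (-(t:ℂ)/y) = -(y⁻¹ * t) := fun t => by ring
    have h2 : ∀ mm : ℤ, (-(mm:ℂ)/y) = -(mm:ℂ) * y⁻¹ := fun mm => by ring
    simp_rw [h1, h2]
    exact master A hA hw
  · intro y hy
    have hy0 : y ≠ 0 := fun h => by simp [h] at hy
    have hw : 0 < (-y⁻¹).re := by
      rw [Complex.neg_re, Complex.inv_re]
      have : y.re / Complex.normSq y < 0 :=
        div_neg_of_neg_of_pos hy (Complex.normSq_pos.mpr hy0)
      linarith
    let e : {m : ℤ // m ≠ 0} ≃ {m : ℤ // m ≠ 0} :=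
      ⟨fun m => ⟨-m.1, neg_ne_zero.mpr m.2⟩, fun m => ⟨-m.1, neg_ne_zero.mpr m.2⟩,
       fun m => by simp, fun m => by simp⟩
    have hS : ∀ t : ℝ, (∑' m : {m : ℤ // m ≠ 0}, A m / (-(t:ℂ) - 2*Real.pi*I*(m.1:ℂ)))
        = - ∑' m : {m : ℤ // m ≠ 0}, (A (e m)) / ((t:ℂ) - 2*Real.pi*I*(m.1:ℂ)) := by
      intro t
      rw [← Equiv.tsum_eq e (fun m => A m / (-(t:ℂ) - 2*Real.pi*I*(m.1:ℂ))), ← tsum_neg]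
      refine tsum_congr fun m => ?_
      show A (e m) / (-(t:ℂ) - 2*Real.pi*I*((-m.1 : ℤ):ℂ))
          = -(A (e m) / ((t:ℂ) - 2*Real.pi*I*(m.1:ℂ)))
      rw [show (-(t:ℂ) - 2*Real.pi*I*((-m.1:ℤ):ℂ)) = -((t:ℂ) - 2*Real.pi*I*(m.1:ℂ)) by
        push_cast; ring, div_neg]
    have hI : ∀ t : ℝ, Complex.exp ((t:ℂ)/y) *
        (-(1 / (Real.pi * I)) * ∑' m : {m : ℤ // m ≠ 0}, A m / (-(t:ℂ) - 2*Real.pi*I*(m.1:ℂ)))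
        = -(Complex.exp (-((-y⁻¹) * t)) *
          (-(1 / (Real.pi * I)) * ∑' m : {m : ℤ // m ≠ 0}, A (e m) / ((t:ℂ) - 2*Real.pi*I*(m.1:ℂ)))) := by
      intro t
      rw [hS t]
      have harg : ((t:ℂ)/y) = -((-y⁻¹) * t) := by ring
      rw [harg]
      ring
    simp_rw [hI]
    rw [integral_neg, neg_neg]
    have hB' : Summable fun m : {m : ℤ // m ≠ 0} => ‖A (e m)‖ / |(((e m).1 : ℤ) : ℝ)| :=
      (Equiv.summable_iff e).mpr hA
    have hB : Summable fun m : {m : ℤ // m ≠ 0} => ‖A (e m)‖ / |((m.1 : ℤ) : ℝ)| := by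
      refine hB'.congr fun m => ?_
      show ‖A (e m)‖ / |((-m.1 : ℤ) : ℝ)| = ‖A (e m)‖ / |((m.1 : ℤ) : ℝ)|
      push_cast
      rw [abs_neg]
    rw [master (fun m => A (e m)) hB hw]
    congr 1
    rw [← Equiv.tsum_eq e (fun m => A m * e1 (-(m.1:ℂ) / y))]
    refine tsum_congr fun m => ?_
    show A (e m) * e1 (-(m.1:ℂ) * (-y⁻¹)) = A (e m) * e1 (-((-m.1 : ℤ):ℂ) / y)
    congr 1
    push_cast
    ring
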